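/- Let R be a zero-dimensional commutative ring. Then the space Prm(R) of primary ideals of R, with the coarse lower topology, is sober. -/

import Mathlib

/-- The coarse lower topology on the set of ideals of a commutative ring. -/
def coarseLowerTopology (R : Type*) [CommRing R] : TopologicalSpace (Ideal R) :=
  TopologicalSpace.generateFrom {U : Set (Ideal R) | ∃ a : Ideal R, U = {i : Ideal R | a ≤ i}ᶜ}

section Aux

variable {R : Type*} [CommRing R]

/-- In a zero-dimensional ring, every element `a` satisfies `a ^ (n+1) * t = a ^ n`. -/
lemma zero_dim_pow (hdim : ∀ p : Ideal R, p.IsPrime → p.IsMaximal) (a : R) :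
    ∃ (n : ℕ) (t : R), a ^ (n + 1) * t = a ^ n := by
  classical
  -- the multiplicative set {a^n * (1 - a*t)}
  set M : Submonoid R :=
    { carrier := {x | ∃ (n : ℕ) (t : R), x = a ^ n * (1 - a * t)}
      mul_mem' := by
        rintro x y ⟨n, t, rfl⟩ ⟨m, s, rfl⟩
        exact ⟨n + m, t + s - a * t * s, by ring⟩
      one_mem' := ⟨0, 0, by ring⟩ } with hM
  by_cases h0 : (0 : R) ∈ M
  · obtain ⟨n, t, ht⟩ := h0
    exact ⟨n, t, by linear_combination ht⟩
  · exfalso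
    have hdisj : Disjoint ((⊥ : Ideal R) : Set R) (M : Set R) := by
      rw [Set.disjoint_left]
      rintro x hx hxM
      simp only [SetLike.mem_coe, Ideal.mem_bot] at hx
      exact h0 (hx ▸ hxM)
    obtain ⟨p, hp, -, hpd⟩ := Ideal.exists_le_prime_disjoint (⊥ : Ideal R) M hdisj
    have ha : a ∉ p := by
      intro hap
      exact Set.disjoint_left.mp hpd hap ⟨1, 0, by ring⟩
    have hmax := hdim p hp
    -- p + (a) = ⊤ since p maximal and a ∉ p
    have : p ⊔ Ideal.span {a} = ⊤ := by
      by_contra hne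
      have heq : p = p ⊔ Ideal.span {a} := hmax.eq_of_le hne le_sup_left
      refine ha ?_
      rw [heq]
      exact Ideal.mem_sup_right (Ideal.subset_span rfl)
    have h1 : (1 : R) ∈ p ⊔ Ideal.span {a} := this ▸ Submodule.mem_top
    obtain ⟨y, hy, z, hz, hyz⟩ := Submodule.mem_sup.mp h1
    obtain ⟨t, rfl⟩ := Ideal.mem_span_singleton'.mp hz
    -- 1 - a * t = y ∈ p, but 1 - a*t ∈ M, contradiction with disjointness
    have hmem : (1 : R) - a * t ∈ p := by
      have : (1 : R) - t * a = y := by linear_combination -hyz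
      rw [mul_comm, this]; exact hy
    exact Set.disjoint_left.mp hpd hmem ⟨0, t, by ring⟩

lemma pow_mem_of_mem_radical {q : Ideal R} {a : R} {n : ℕ} {t : R}
    (hnt : a ^ (n + 1) * t = a ^ n) (ha : a ∈ q.radical) : a ^ n ∈ q := by
  obtain ⟨m, hm⟩ := ha
  -- a^n = a^(n+m) * t^m
  have key : ∀ k : ℕ, a ^ n = a ^ (n + k) * t ^ k := by
    intro k
    induction k with
    | zero => simp
    | succ k ih =>
      calc a ^ n = a ^ (n + k) * t ^ k := ih
        _ = (a ^ (n + 1) * t) * a ^ k * t ^ k := by rw [hnt]; ring_nf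
        _ = a ^ (n + (k + 1)) * t ^ (k + 1) := by ring
  rw [key m]
  have : a ^ (n + m) * t ^ m = a ^ m * (a ^ n * t ^ m) := by ring
  rw [this]
  exact Ideal.mul_mem_right _ _ hm

lemma subbasic_isClosed (a : Ideal R) :
    letI := coarseLowerTopology R
    IsClosed {i : Ideal R | a ≤ i} := by
  letI := coarseLowerTopology R
  rw [← isOpen_compl_iff]
  exact TopologicalSpace.GenerateOpen.basic _ ⟨a, rfl⟩

lemma specializes_of_le {η s : Ideal R} (h : η ≤ s) :
    letI := coarseLowerTopology R
    η ⤳ s := by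
  letI := coarseLowerTopology R
  rw [specializes_iff_forall_open]
  intro U hU hsU
  induction hU with
  | basic V hV =>
    obtain ⟨a, rfl⟩ := hV
    exact fun haη => hsU (h.trans' haη)
  | univ => trivial
  | inter V W _ _ ihV ihW => exact ⟨ihV hsU.1, ihW hsU.2⟩
  | sUnion C _ ih =>
    obtain ⟨V, hVC, hsV⟩ := hsU
    exact ⟨V, hVC, ih V hVC hsV⟩

end Aux

/-- If `R` is zero-dimensional (every prime is maximal), the space of primary
ideals is sober. -/
theorem prm_sober_of_dim_zero {R : Type*} [CommRing R]
    (hdim : ∀ p : Ideal R, p.IsPrime → p.IsMaximal) :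
    letI := coarseLowerTopology R
    QuasiSober {a : Ideal R | a.IsPrimary} := by
  classical
  letI := coarseLowerTopology R
  constructor
  intro S hirr hcl
  set η : Ideal R := sInf (Subtype.val '' S) with hη
  -- every element of S contains η
  have hle : ∀ s : {a : Ideal R | a.IsPrimary}, s ∈ S → η ≤ s.val := by
    intro s hs
    exact sInf_le ⟨s, hs, rfl⟩
  -- key closedness fact: any primary ideal containing η is in S
  have hmemS : ∀ i : {a : Ideal R | a.IsPrimary}, η ≤ i.val → i ∈ S := by
    intro i hi
    by_contra hiS
    have hopen : IsOpen Sᶜ := hcl.isOpen_compl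
    rw [isOpen_induced_iff] at hopen
    obtain ⟨U, hU, hUS⟩ := hopen
    have hiU : i.val ∈ U := by
      have : i ∈ Subtype.val ⁻¹' U := hUS ▸ hiS
      exact this
    obtain ⟨B, ⟨f, ⟨hffin, hfsub⟩, rfl⟩, hiB, hBU⟩ :=
      (TopologicalSpace.isTopologicalBasis_of_subbasis rfl).exists_subset_of_mem_open hiU hU
    -- apply irreducibility to the finite family of closed sets
    set F : Finset (Set {a : Ideal R | a.IsPrimary}) :=
      hffin.toFinset.image (fun V => (Subtype.val ⁻¹' Vᶜ : Set {a : Ideal R | a.IsPrimary}))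
      with hF
    have hclosed : ∀ Z ∈ F, IsClosed Z := by
      intro Z hZ
      rw [hF, Finset.mem_image] at hZ
      obtain ⟨V, hV, rfl⟩ := hZ
      rw [Set.Finite.mem_toFinset] at hV
      have : IsOpen V := TopologicalSpace.GenerateOpen.basic _ (hfsub hV)
      exact (this.isClosed_compl).preimage continuous_subtype_val
    have hcover : S ⊆ ⋃₀ ↑F := by
      intro s hs
      have hsU : s.val ∉ U := by
        intro h
        have hmem : s ∈ Subtype.val ⁻¹' U := h
        rw [hUS] at hmem
        exact hmem hs
      have : s.val ∉ ⋂₀ f := fun h => hsU (hBU h)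
      rw [Set.mem_sInter] at this
      push_neg at this
      obtain ⟨V, hVf, hsV⟩ := this
      refine ⟨Subtype.val ⁻¹' Vᶜ, ?_, hsV⟩
      rw [Finset.coe_image]
      exact ⟨V, (Set.Finite.mem_toFinset hffin).mpr hVf, rfl⟩
    obtain ⟨Z, hZF, hSZ⟩ := (isIrreducible_iff_sUnion_isClosed.mp hirr) F hclosed hcover
    rw [hF, Finset.mem_image] at hZF
    obtain ⟨V, hVf, rfl⟩ := hZF
    rw [Set.Finite.mem_toFinset] at hVf
    obtain ⟨a, rfl⟩ := hfsub hVf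
    -- every s ∈ S satisfies a ≤ s, hence a ≤ η ≤ i, yet i ∈ V = {j | a ≤ j}ᶜ
    have haη : a ≤ η := by
      refine le_sInf ?_
      rintro j ⟨s, hs, rfl⟩
      have := hSZ hs
      simpa using this
    have : i.val ∈ {j : Ideal R | a ≤ j}ᶜ := hiB _ hVf
    exact this (le_trans haη hi)
  -- η is primary
  have hηq : η.IsPrimary := by
    rw [Ideal.isPrimary_iff]
    obtain ⟨s0, hs0⟩ := hirr.nonempty
    constructor
    · intro htop
      have : s0.val = ⊤ := top_le_iff.mp (htop ▸ hle s0 hs0)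
      exact (Ideal.isPrimary_iff.mp s0.prop).1 this
    · intro x y hxy
      by_cases hx : x ∈ η
      · exact Or.inl hx
      · obtain ⟨n, t, hnt⟩ := zero_dim_pow hdim y
        -- show y^n ∈ q for all q ∈ S by irreducibility
        refine Or.inr ?_
        set C1 : Set {a : Ideal R | a.IsPrimary} := {q | x ∈ q.val} with hC1
        set C2 : Set {a : Ideal R | a.IsPrimary} := {q | y ^ n ∈ q.val} with hC2
        have hC1closed : IsClosed C1 := by
          have : C1 = Subtype.val ⁻¹' {j : Ideal R | Ideal.span {x} ≤ j} := by
            ext q; simp [hC1, Ideal.span_singleton_le_iff_mem]; exact Iff.rfl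
          rw [this]
          exact (subbasic_isClosed _).preimage continuous_subtype_val
        have hC2closed : IsClosed C2 := by
          have : C2 = Subtype.val ⁻¹' {j : Ideal R | Ideal.span {y ^ n} ≤ j} := by
            ext q; simp [hC2, Ideal.span_singleton_le_iff_mem]; exact Iff.rfl
          rw [this]
          exact (subbasic_isClosed _).preimage continuous_subtype_val
        have hcover : S ⊆ ⋃₀ ↑({C1, C2} : Finset (Set {a : Ideal R | a.IsPrimary})) := by
          intro q hq
          have hxyq : x * y ∈ q.val := hle q hq hxy
          rcases (Ideal.isPrimary_iff.mp q.prop).2 hxyq with h | h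
          · exact ⟨C1, by simp, h⟩
          · exact ⟨C2, by simp, pow_mem_of_mem_radical hnt h⟩
        have hclosed : ∀ Z ∈ ({C1, C2} : Finset (Set {a : Ideal R | a.IsPrimary})),
            IsClosed Z := by
          intro Z hZ
          rcases Finset.mem_insert.mp hZ with rfl | hZ
          · exact hC1closed
          · rw [Finset.mem_singleton] at hZ; exact hZ ▸ hC2closed
        obtain ⟨Z, hZ, hSZ⟩ := (isIrreducible_iff_sUnion_isClosed.mp hirr) _ hclosed hcover
        rcases Finset.mem_insert.mp hZ with rfl | hZ
        · -- x ∈ every q ∈ S, hence x ∈ η, contradiction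
          exfalso
          refine hx ?_
          rw [hη, Submodule.mem_sInf]
          rintro j ⟨s, hs, rfl⟩
          exact hSZ hs
        · rw [Finset.mem_singleton] at hZ
          subst hZ
          refine ⟨n, ?_⟩
          rw [hη, Submodule.mem_sInf]
          rintro j ⟨s, hs, rfl⟩
          exact hSZ hs
  -- the generic point
  refine ⟨⟨η, hηq⟩, ?_⟩
  have hηS : (⟨η, hηq⟩ : {a : Ideal R | a.IsPrimary}) ∈ S := hmemS _ le_rfl
  rw [isGenericPoint_def]
  refine le_antisymm (closure_minimal (Set.singleton_subset_iff.mpr hηS) hcl) ?_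
  intro s hs
  rw [← specializes_iff_mem_closure]
  rw [← Topology.IsInducing.subtypeVal.specializes_iff]
  exact specializes_of_le (hle s hs)
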